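/- The number of sequences (a_1, ..., a_n) of nonnegative integers whose nondecreasing rearrangement c_1 ≤ ... ≤ c_n satisfies either (c_i < i for all i) or (c_1 = 1 and c_i < i for all i ≥ 2) equals (n+1)^(n-1) + (n-1)^(n-1). -/

import Mathlib

/-- The nondecreasing rearrangement of a sequence. -/
def sortedSeq {n : ℕ} (a : Fin n → ℕ) : Fin n → ℕ := a ∘ Tuple.sort a

namespace PFAux


def cnt {n : ℕ} (a : Fin n → ℕ) (k : ℕ) : ℕ :=
  (Finset.univ.filter (fun i => a i ≤ k)).card

lemma cnt_sortedSeq {n : ℕ} (a : Fin n → ℕ) (k : ℕ) : cnt (sortedSeq a) k = cnt a k := by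
  unfold cnt sortedSeq
  apply Finset.card_nbij (i := fun i => Tuple.sort a i)
  · intro i hi; simp_all
  · intro i hi j hj hij; exact (Tuple.sort a).injective hij
  · intro j hj
    refine ⟨(Tuple.sort a).symm j, ?_, by simp⟩
    simp_all

lemma monotone_le_iff {n : ℕ} {c : Fin n → ℕ} (hc : Monotone c) (i : Fin n) (k : ℕ) :
    c i ≤ k ↔ i.val < cnt c k := by
  constructor
  · intro h
    have hsub : Finset.Iic i ⊆ Finset.univ.filter (fun j => c j ≤ k) := by
      intro j hj
      simp only [Finset.mem_Iic] at hj
      simp only [Finset.mem_filter, Finset.mem_univ, true_and]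
      exact le_trans (hc hj) h
    have := Finset.card_le_card hsub
    simpa [cnt, Fin.card_Iic] using this.trans_lt' (by simp [Fin.card_Iic])
  · intro h
    by_contra hk
    push_neg at hk
    have hsub : Finset.univ.filter (fun j => c j ≤ k) ⊆ Finset.Iio i := by
      intro j hj
      simp only [Finset.mem_filter, Finset.mem_univ, true_and] at hj
      simp only [Finset.mem_Iio]
      by_contra hji
      push_neg at hji
      exact absurd (le_trans (hc hji) hj) (not_le.mpr hk)
    have := Finset.card_le_card hsub
    rw [Fin.card_Iio] at this
    unfold cnt at h
    omega

lemma sorted_le_iff {n : ℕ} (a : Fin n → ℕ) (i : Fin n) (k : ℕ) :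
    sortedSeq a i ≤ k ↔ i.val < cnt a k := by
  rw [← cnt_sortedSeq a k]
  exact monotone_le_iff (Tuple.monotone_sort a) i k

lemma memA_iff {n : ℕ} (a : Fin n → ℕ) :
    (∀ i : Fin n, sortedSeq a i < i.val + 1) ↔ ∀ k, k < n → k < cnt a k := by
  constructor
  · intro h k hk
    have := (sorted_le_iff a ⟨k, hk⟩ k).mp (Nat.lt_succ_iff.mp (h ⟨k, hk⟩))
    simpa using this
  · intro h i
    rw [Nat.lt_succ_iff, sorted_le_iff]
    exact h i.val i.isLt



/-- Cycle lemma, decreasing case (step -1). -/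
lemma cycle_neg (P : ℕ → ℤ) (m : ℕ) (hm : 1 ≤ m) (hper : ∀ r, P (r + m) = P r - 1) :
    ∃! r, r < m ∧ ∀ j, r < j → j < r + m → P r ≤ P j := by
  classical
  have key : ∀ a b, a < b → b < m → (∀ j, a < j → j < a + m → P a ≤ P j) →
      (∀ j, b < j → j < b + m → P b ≤ P j) → False := by
    intro a b hab hbm ha hb
    have h1 : P a ≤ P b := ha b hab (by omega)
    have h2 : P b ≤ P (a + m) := hb (a + m) (by omega) (by omega)
    have h3 : P (a + m) = P a - 1 := hper a
    omega
  have hne : ((Finset.range m).filter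
      (fun r => ∀ j ∈ Finset.range m, P r ≤ P j)).Nonempty := by
    obtain ⟨r, hr, hmin⟩ := Finset.exists_min_image (Finset.range m) P
      ⟨0, Finset.mem_range.mpr hm⟩
    exact ⟨r, Finset.mem_filter.mpr ⟨hr, hmin⟩⟩
  set S := (Finset.range m).filter (fun r => ∀ j ∈ Finset.range m, P r ≤ P j) with hS
  set r := S.min' hne with hr
  have hrS : r ∈ S := Finset.min'_mem _ _
  have hrm : r < m := Finset.mem_range.mp (Finset.mem_filter.mp hrS).1
  have hmin : ∀ j < m, P r ≤ P j := fun j hj =>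
    (Finset.mem_filter.mp hrS).2 j (Finset.mem_range.mpr hj)
  have hstrict : ∀ j < r, P r < P j := by
    intro j hj
    rcases lt_or_ge (P j) (P r) with h | h
    · exact absurd (hmin j (lt_trans hj hrm)) (not_le.mpr h)
    · rcases h.lt_or_eq with h | h
      · exact h
      · exfalso
        have hjS : j ∈ S := Finset.mem_filter.mpr ⟨Finset.mem_range.mpr (lt_trans hj hrm),
          fun k hk => h ▸ (Finset.mem_filter.mp hrS).2 k hk⟩
        exact absurd (Finset.min'_le _ _ hjS) (not_le.mpr hj)
  have hgood : ∀ j, r < j → j < r + m → P r ≤ P j := by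
    intro j hrj hjm
    rcases lt_or_ge j m with h | h
    · exact hmin j h
    · have hjm' : j - m < r := by omega
      have hpe : P j = P (j - m) - 1 := by
        have := hper (j - m); rw [Nat.sub_add_cancel h] at this; omega
      have := hstrict (j - m) hjm'
      omega
  refine ⟨r, ⟨hrm, hgood⟩, ?_⟩
  intro b ⟨hbm, hb⟩
  by_contra hne'
  rcases Ne.lt_or_gt hne' with h | h
  · exact key b r h hrm hb hgood
  · exact key r b h hbm hgood hb

/-- Cycle lemma, increasing case (step +1). -/
lemma cycle_pos (P : ℕ → ℤ) (m : ℕ) (hm : 1 ≤ m) (hper : ∀ r, P (r + m) = P r + 1) :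
    ∃! r, r < m ∧ ∀ j, r < j → j < r + m → P r + 1 ≤ P j := by
  classical
  have key : ∀ a b, a < b → b < m → (∀ j, a < j → j < a + m → P a + 1 ≤ P j) →
      (∀ j, b < j → j < b + m → P b + 1 ≤ P j) → False := by
    intro a b hab hbm ha hb
    have h1 : P a + 1 ≤ P b := ha b hab (by omega)
    have h2 : P b + 1 ≤ P (a + m) := hb (a + m) (by omega) (by omega)
    have h3 : P (a + m) = P a + 1 := hper a
    omega
  have hne : ((Finset.range m).filter
      (fun r => ∀ j ∈ Finset.range m, P r ≤ P j)).Nonempty := by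
    obtain ⟨r, hr, hmin⟩ := Finset.exists_min_image (Finset.range m) P
      ⟨0, Finset.mem_range.mpr hm⟩
    exact ⟨r, Finset.mem_filter.mpr ⟨hr, hmin⟩⟩
  set S := (Finset.range m).filter (fun r => ∀ j ∈ Finset.range m, P r ≤ P j) with hS
  set r := S.max' hne with hr
  have hrS : r ∈ S := Finset.max'_mem _ _
  have hrm : r < m := Finset.mem_range.mp (Finset.mem_filter.mp hrS).1
  have hmin : ∀ j < m, P r ≤ P j := fun j hj =>
    (Finset.mem_filter.mp hrS).2 j (Finset.mem_range.mpr hj)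
  have hstrict : ∀ j, r < j → j < m → P r < P j := by
    intro j hrj hj
    rcases lt_or_ge (P j) (P r) with h | h
    · exact absurd (hmin j hj) (not_le.mpr h)
    · rcases h.lt_or_eq with h | h
      · exact h
      · exfalso
        have hjS : j ∈ S := Finset.mem_filter.mpr ⟨Finset.mem_range.mpr hj,
          fun k hk => h ▸ (Finset.mem_filter.mp hrS).2 k hk⟩
        exact absurd (Finset.le_max' _ _ hjS) (not_le.mpr hrj)
  have hgood : ∀ j, r < j → j < r + m → P r + 1 ≤ P j := by
    intro j hrj hjm
    rcases lt_or_ge j m with h | h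
    · exact hstrict j hrj h
    · have hjm' : j - m < r := by omega
      have hpe : P j = P (j - m) + 1 := by
        have := hper (j - m); rw [Nat.sub_add_cancel h] at this; omega
      have := hmin (j - m) (by omega)
      omega
  refine ⟨r, ⟨hrm, hgood⟩, ?_⟩
  intro b ⟨hbm, hb⟩
  by_contra hne'
  rcases Ne.lt_or_gt hne' with h | h
  · exact key b r h hrm hb hgood
  · exact key r b h hbm hgood hb



variable {n m : ℕ}

def fib (a : Fin n → Fin m) (v : ℕ) : ℕ :=
  (Finset.univ.filter (fun i => (a i : ℕ) = v)).card

def Psum (a : Fin n → Fin m) (r : ℕ) : ℤ :=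
  (∑ j ∈ Finset.range r, (fib a (j % m) : ℤ)) - r

lemma sum_fib (a : Fin n → Fin m) : ∑ v ∈ Finset.range m, fib a v = n := by
  have := Finset.card_eq_sum_card_fiberwise
    (f := fun i : Fin n => (a i : ℕ)) (s := Finset.univ) (t := Finset.range m)
    (fun i _ => Finset.mem_range.mpr (a i).isLt)
  simpa [fib] using this.symm

lemma sum_window (a : Fin n → Fin m) (x : ℕ) :
    ∑ j ∈ Finset.Ico x (x + m), fib a (j % m) = n := by
  induction x with
  | zero =>
    have he : Finset.Ico 0 (0 + m) = Finset.range m := by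
      rw [Nat.zero_add, Finset.range_eq_Ico]
    exact (Finset.sum_congr he (fun j hj => by
      rw [Nat.mod_eq_of_lt (Finset.mem_range.mp hj)])).trans (sum_fib a)
  | succ x ih =>
    rcases Nat.eq_zero_or_pos m with hm | hm
    · simp [hm] at ih ⊢; omega
    have e1 : ∑ j ∈ Finset.Ico x (x + m), fib a (j % m)
        = fib a (x % m) + ∑ j ∈ Finset.Ico (x+1) (x + m), fib a (j % m) :=
      Finset.sum_eq_sum_Ico_succ_bot (by omega) _
    have e2 : ∑ j ∈ Finset.Ico (x+1) (x+1+m), fib a (j % m)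
        = (∑ j ∈ Finset.Ico (x+1) (x + m), fib a (j % m)) + fib a ((x + m) % m) := by
      rw [show x + 1 + m = (x + m) + 1 by omega, Finset.sum_Ico_succ_top (by omega)]
    rw [e2, Nat.add_mod_right]
    omega

lemma Psum_period (a : Fin n → Fin m) (r : ℕ) :
    Psum a (r + m) = Psum a r + ((n : ℤ) - m) := by
  unfold Psum
  simp only [Finset.range_eq_Ico]
  have h1 : (∑ j ∈ Finset.Ico 0 r, (fib a (j % m) : ℤ))
      + ∑ j ∈ Finset.Ico r (r + m), (fib a (j % m) : ℤ)
      = ∑ j ∈ Finset.Ico 0 (r + m), (fib a (j % m) : ℤ) :=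
    Finset.sum_Ico_consecutive _ (Nat.zero_le r) (by omega)
  have h2 : (∑ j ∈ Finset.Ico r (r + m), (fib a (j % m) : ℤ)) = (n : ℤ) := by
    have := sum_window a r
    exact_mod_cast congrArg (Nat.cast : ℕ → ℤ) this
  push_cast
  linarith

lemma cnt_rot (a : Fin n → Fin m) (c : Fin m) (k : ℕ) (hk : k < m) :
    cnt (fun i => ((a i + c : Fin m) : ℕ)) k
      = ∑ j ∈ Finset.range (k+1), fib a ((m - (c : ℕ) + j) % m) := by
  have hm : 0 < m := c.pos
  set r := m - (c : ℕ) with hr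
  have hcm : (c : ℕ) < m := c.isLt
  have helper0 : ∀ j, j < m → ((r + j) % m + (c : ℕ)) % m = j := by
    intro j hj
    rw [Nat.mod_add_mod]
    have : r + j + (c : ℕ) = m + j := by omega
    rw [this, Nat.add_mod_left, Nat.mod_eq_of_lt hj]
  have helper1 : ∀ v, v < m → v = (r + ((v + (c : ℕ)) % m)) % m := by
    intro v hv
    rw [Nat.add_mod_mod]
    have : r + (v + (c : ℕ)) = m + v := by omega
    rw [this, Nat.add_mod_left, Nat.mod_eq_of_lt hv]
  have hfilter : Finset.univ.filter (fun i => ((a i + c : Fin m) : ℕ) ≤ k)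
      = (Finset.range (k+1)).biUnion
          (fun j => Finset.univ.filter (fun i => (a i : ℕ) = (r + j) % m)) := by
    ext i
    simp only [Finset.mem_filter, Finset.mem_univ, true_and, Finset.mem_biUnion,
      Finset.mem_range, Fin.val_add]
    constructor
    · intro h
      exact ⟨((a i : ℕ) + (c : ℕ)) % m, by omega, helper1 _ (a i).isLt⟩
    · rintro ⟨j, hj, hv⟩
      rw [hv, helper0 j (by omega)]
      omega
  rw [cnt, hfilter, Finset.card_biUnion]
  · rfl
  · intro j1 h1 j2 h2 hne
    simp only [Finset.mem_coe, Finset.mem_range, Nat.lt_succ_iff] at h1 h2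
    rw [Function.onFun, Finset.disjoint_left]
    intro i hi1 hi2
    simp only [Finset.mem_filter, Finset.mem_univ, true_and] at hi1 hi2
    apply hne
    have := helper0 j1 (by omega)
    rw [← hi1, hi2, helper0 j2 (by omega)] at this
    omega

lemma cnt_rot' (a : Fin n → Fin m) (c : Fin m) (k : ℕ) (hk : k < m) :
    (cnt (fun i => ((a i + c : Fin m) : ℕ)) k : ℤ)
      = Psum a ((m - (c : ℕ)) + k + 1) - Psum a (m - (c : ℕ)) + (k + 1) := by
  set r := m - (c : ℕ) with hr
  rw [cnt_rot a c k hk]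
  have e1 : ∑ j ∈ Finset.Ico r (r + k + 1), (fib a (j % m) : ℤ)
      = ∑ j ∈ Finset.range (k+1), (fib a ((r + j) % m) : ℤ) := by
    rw [Finset.sum_Ico_eq_sum_range, show r + k + 1 - r = k + 1 from by omega]
  have h1 : (∑ j ∈ Finset.Ico 0 r, (fib a (j % m) : ℤ))
      + ∑ j ∈ Finset.Ico r (r + k + 1), (fib a (j % m) : ℤ)
      = ∑ j ∈ Finset.Ico 0 (r + k + 1), (fib a (j % m) : ℤ) :=
    Finset.sum_Ico_consecutive _ (Nat.zero_le r) (by omega)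
  have hgoal : (∑ j ∈ Finset.range (k+1), (fib a ((r + j) % m) : ℤ))
      = Psum a (r + k + 1) - Psum a r + (k + 1) := by
    unfold Psum
    rw [← e1]
    simp only [← Finset.range_eq_Ico] at h1
    push_cast
    linarith
  rw [← hgoal]
  push_cast
  rfl


end PFAux


namespace PFAux2
open PFAux

variable {n m : ℕ}

def Good (t : ℕ) (b : Fin n → Fin m) : Prop :=
  ∀ k, k < m - 1 → k + t ≤ cnt (fun i => (b i : ℕ)) k

lemma exists_unique_rot (hm : 1 ≤ m) (t : ℕ)
    (ht : (t = 1 ∧ m = n + 1) ∨ (t = 2 ∧ n = m + 1)) (a : Fin n → Fin m) :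
    ∃! c : Fin m, Good t (fun i => a i + c) := by
  classical
  set P := Psum a with hP
  have hstep : ∀ r, P (r + m) = P r + (2 * (t : ℤ) - 3) := by
    intro r
    rw [hP, Psum_period]
    rcases ht with ⟨ht1, hm1⟩ | ⟨ht1, hm1⟩ <;> subst ht1 <;> subst hm1 <;> push_cast <;> ring
  have hcyc : ∃! r, r < m ∧ ∀ j, r < j → j < r + m → P r + ((t : ℤ) - 1) ≤ P j := by
    rcases ht with ⟨ht1, _⟩ | ⟨ht1, _⟩
    · subst ht1
      have h := cycle_neg P m hm (fun r => by rw [hstep r]; push_cast; ring)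
      simpa using h
    · subst ht1
      have h := cycle_pos P m hm (fun r => by rw [hstep r]; push_cast; ring)
      obtain ⟨r, ⟨h1, h2⟩, h3⟩ := h
      refine ⟨r, ⟨h1, fun j hj1 hj2 => ?_⟩, fun b hb => h3 b ⟨hb.1, fun j hj1 hj2 => ?_⟩⟩
      · have := h2 j hj1 hj2; push_cast; linarith
      · have := hb.2 j hj1 hj2; push_cast at this; linarith
  have key : ∀ c : Fin m, Good t (fun i => a i + c) ↔
      (∀ j, (m - (c : ℕ)) < j → j < (m - (c : ℕ)) + m →
        P (m - (c : ℕ)) + ((t : ℤ) - 1) ≤ P j) := by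
    intro c
    constructor
    · intro hg j hj1 hj2
      set r := m - (c : ℕ) with hr
      have hk : j - r - 1 < m - 1 := by omega
      have h1 := hg (j - r - 1) hk
      have hc := cnt_rot' a c (j - r - 1) (by omega)
      rw [show (m - (c : ℕ)) + (j - r - 1) + 1 = j from by omega] at hc
      have h2 : (((j - r - 1) + t : ℕ) : ℤ) ≤ (cnt (fun i => ((a i + c : Fin m) : ℕ)) (j - r - 1) : ℤ) := by
        exact_mod_cast h1
      rw [hc] at h2
      push_cast at h2
      linarith
    · intro hw k hk
      set r := m - (c : ℕ) with hr
      have hc := cnt_rot' a c k (by omega)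
      have h1 := hw (r + k + 1) (by omega) (by omega)
      have h2 : ((k + t : ℕ) : ℤ) ≤ (cnt (fun i => ((a i + c : Fin m) : ℕ)) k : ℤ) := by
        rw [hc]
        push_cast
        linarith
      exact_mod_cast h2
  have hshift : ∀ r, (∀ j, r + m < j → j < r + m + m → P (r + m) + ((t : ℤ) - 1) ≤ P j) ↔
      (∀ j, r < j → j < r + m → P r + ((t : ℤ) - 1) ≤ P j) := by
    intro r
    constructor
    · intro h j h1 h2
      have h3 := h (j + m) (by omega) (by omega)
      rw [hstep j, hstep r] at h3
      linarith
    · intro h j h1 h2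
      have h4 := hstep (j - m)
      rw [Nat.sub_add_cancel (by omega)] at h4
      have h5 := h (j - m) (by omega) (by omega)
      rw [hstep r]
      linarith
  obtain ⟨r, ⟨hrm, hr⟩, huniq⟩ := hcyc
  refine ⟨⟨(m - r) % m, Nat.mod_lt _ (by omega)⟩, ?_, ?_⟩
  · apply (key _).mpr
    by_cases h0 : r = 0
    · subst h0
      have hv : m - ((⟨(m - 0) % m, Nat.mod_lt _ (by omega)⟩ : Fin m) : ℕ) = m := by
        simp [Nat.mod_self]
      rw [hv]
      have := (hshift 0).mpr (by simpa using hr)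
      intro j h1 h2
      have := this j (by omega) (by omega)
      simpa using this
    · have hv : m - ((⟨(m - r) % m, Nat.mod_lt _ (by omega)⟩ : Fin m) : ℕ) = r := by
        simp only
        rw [Nat.mod_eq_of_lt (by omega)]
        omega
      rw [hv]
      exact hr
  · intro c' hc'
    rw [key] at hc'
    apply Fin.ext
    simp only
    by_cases h0 : (c' : ℕ) = 0
    · have hv : m - (c' : ℕ) = m := by omega
      rw [hv] at hc'
      have hw0 : ∀ j, 0 < j → j < 0 + m → P 0 + ((t : ℤ) - 1) ≤ P j := by
        apply (hshift 0).mp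
        intro j h1 h2
        simpa using hc' j (by omega) (by omega)
      have : (0 : ℕ) = r := huniq 0 ⟨by omega, hw0⟩
      rw [h0, ← this]
      simp [Nat.mod_self]
    · have hlt : m - (c' : ℕ) < m := by have := c'.isLt; omega
      have : m - (c' : ℕ) = r := huniq _ ⟨hlt, hc'⟩
      have hc'm : (c' : ℕ) < m := c'.isLt
      rw [Nat.mod_eq_of_lt (by omega)]
      omega

lemma card_good (hm : 1 ≤ m) (hn : 1 ≤ n) (t : ℕ)
    (ht : (t = 1 ∧ m = n + 1) ∨ (t = 2 ∧ n = m + 1)) :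
    Nat.card {b : Fin n → Fin m // Good t b} = m ^ (n - 1) := by
  classical
  haveI : NeZero m := ⟨by omega⟩
  have hEU := exists_unique_rot hm t ht
  let c0 : (Fin n → Fin m) → Fin m := fun a => (hEU a).exists.choose
  have hc0 : ∀ a, Good t (fun i => a i + c0 a) := fun a => (hEU a).exists.choose_spec
  let e : {b : Fin n → Fin m // Good t b} × Fin m ≃ (Fin n → Fin m) :=
    { toFun := fun p i => p.1.val i + p.2
      invFun := fun a => (⟨fun i => a i + c0 a, hc0 a⟩, -(c0 a))
      left_inv := by
        rintro ⟨⟨b, hb⟩, c⟩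
        have hfun : (fun i => (fun i => b i + c) i + -c) = b := by
          funext i; simp
        have hQ : Good t (fun i => (fun i => b i + c) i + -c) := by rw [hfun]; exact hb
        have huc : c0 (fun i => b i + c) = -c := (hEU _).unique (hc0 _) hQ
        refine Prod.ext_iff.mpr ⟨Subtype.ext ?_, ?_⟩
        · funext i
          show b i + c + c0 (fun i => b i + c) = b i
          rw [huc]; simp
        · show -(c0 (fun i => b i + c)) = c
          rw [huc, neg_neg]
      right_inv := by
        intro a
        funext i
        show (a i + c0 a) + -(c0 a) = a i
        simp }
  have h1 : Nat.card ({b : Fin n → Fin m // Good t b} × Fin m)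
      = Nat.card (Fin n → Fin m) := Nat.card_congr e
  rw [Nat.card_prod] at h1
  have h2 : Nat.card (Fin m) = m := by simp
  have h3 : Nat.card (Fin n → Fin m) = m ^ n := by
    simp [Nat.card_fun]
  rw [h2, h3] at h1
  have h4 : m ^ n = m ^ (n - 1) * m := by
    rw [← pow_succ]
    congr 1
    omega
  rw [h4] at h1
  exact Nat.eq_of_mul_eq_mul_right (by omega) h1

end PFAux2


namespace PFAux2
open PFAux

lemma all_le_of_cnt {n : ℕ} (a : Fin n → ℕ) (k : ℕ) (h : n ≤ cnt a k) :
    ∀ i, a i ≤ k := by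
  intro i
  by_contra hi
  have hss : Finset.univ.filter (fun j => a j ≤ k) ⊂ Finset.univ := by
    rw [Finset.ssubset_iff_of_subset (Finset.subset_univ _)]
    exact ⟨i, Finset.mem_univ i, by simp [hi]⟩
  have := Finset.card_lt_card hss
  simp only [Finset.card_univ, Fintype.card_fin] at this
  unfold cnt at h
  omega

lemma val_inj {n m : ℕ} : Function.Injective (fun (b : Fin n → Fin m) i => (b i : ℕ)) := by
  intro b1 b2 h
  funext i
  exact Fin.ext (congrFun h i)

lemma val_succ_inj {n m : ℕ} :
    Function.Injective (fun (b : Fin n → Fin m) i => (b i : ℕ) + 1) := by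
  intro b1 b2 h
  funext i
  have := congrFun h i
  simp only at this
  exact Fin.ext (by omega)

lemma SA_eq {n : ℕ} (hn : 1 ≤ n) :
    {a : Fin n → ℕ | ∀ i : Fin n, sortedSeq a i < i.val + 1}
      = (fun (b : Fin n → Fin (n+1)) i => (b i : ℕ)) '' {b | Good 1 b} := by
  ext a
  simp only [Set.mem_setOf_eq, Set.mem_image]
  constructor
  · intro ha
    have hcnt : ∀ k, k < n → k < cnt a k := (memA_iff a).mp ha
    have hb : ∀ i, a i ≤ n - 1 := by
      apply all_le_of_cnt
      have := hcnt (n-1) (by omega)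
      omega
    refine ⟨fun i => ⟨a i, by have := hb i; omega⟩, ?_, rfl⟩
    intro k hk
    simp only [show n + 1 - 1 = n from by omega] at hk
    exact hcnt k hk
  · rintro ⟨b, hb, rfl⟩
    apply (memA_iff _).mpr
    intro k hk
    have := hb k (by omega)
    omega

lemma memB_iff {n : ℕ} (hn : 2 ≤ n) (hn' : 1 ≤ n) (a : Fin n → ℕ) :
    (sortedSeq a ⟨0, hn'⟩ = 1 ∧ ∀ i : Fin n, 1 ≤ i.val → sortedSeq a i < i.val + 1)
      ↔ ((∀ i, 1 ≤ a i) ∧ ∀ k, 1 ≤ k → k < n → k < cnt a k) := by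
  constructor
  · rintro ⟨h1, h2⟩
    constructor
    · intro i
      have : a i = sortedSeq a ((Tuple.sort a).symm i) := by
        simp [sortedSeq]
      rw [this, ← h1]
      exact Tuple.monotone_sort a (show (⟨0, hn'⟩ : Fin n) ≤ _ from Nat.zero_le _)
    · intro k hk1 hkn
      have := (sorted_le_iff a ⟨k, hkn⟩ k).mp (Nat.lt_succ_iff.mp (h2 ⟨k, hkn⟩ hk1))
      simpa using this
  · rintro ⟨h1, h2⟩
    have hmain : ∀ i : Fin n, 1 ≤ i.val → sortedSeq a i < i.val + 1 := by
      intro i hi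
      rw [Nat.lt_succ_iff, sorted_le_iff]
      exact h2 i.val hi i.isLt
    refine ⟨le_antisymm ?_ ?_, hmain⟩
    · rw [sorted_le_iff]
      have h0 : ((⟨0, hn'⟩ : Fin n) : ℕ) = 0 := rfl
      have := h2 1 le_rfl (by omega)
      omega
    · exact h1 _
  
lemma SB_eq {n : ℕ} (hn : 2 ≤ n) (hn' : 1 ≤ n) :
    {a : Fin n → ℕ | sortedSeq a ⟨0, hn'⟩ = 1 ∧
        ∀ i : Fin n, 1 ≤ i.val → sortedSeq a i < i.val + 1}
      = (fun (b : Fin n → Fin (n-1)) i => (b i : ℕ) + 1) '' {b | Good 2 b} := by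
  ext a
  simp only [Set.mem_setOf_eq, Set.mem_image]
  rw [memB_iff hn hn']
  constructor
  · rintro ⟨h1, h2⟩
    have hb : ∀ i, a i ≤ n - 1 := by
      apply all_le_of_cnt
      have := h2 (n-1) (by omega) (by omega)
      omega
    have hsub : ∀ i, a i - 1 < n - 1 := by
      intro i; have := hb i; have := h1 i; omega
    refine ⟨fun i => ⟨a i - 1, hsub i⟩, ?_, ?_⟩
    · intro k hk
      have hc : cnt (fun i => ((⟨a i - 1, hsub i⟩ : Fin (n-1)) : ℕ)) k = cnt a (k+1) := by
        unfold cnt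
        congr 1
        apply Finset.filter_congr
        intro i _
        simp only
        have := h1 i
        constructor <;> intro <;> omega
      rw [hc]
      have := h2 (k+1) (by omega) (by omega)
      omega
    · funext i
      simp only
      have := h1 i
      omega
  · rintro ⟨b, hb, rfl⟩
    refine ⟨fun i => by simp, ?_⟩
    intro k hk1 hkn
    have hc : cnt (fun i => (b i : ℕ) + 1) k = cnt (fun i => (b i : ℕ)) (k-1) := by
      unfold cnt
      congr 1
      apply Finset.filter_congr
      intro i _
      simp only
      constructor <;> intro <;> omega
    rw [hc]
    by_cases hcase : k - 1 < n - 1 - 1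
    · have := hb (k-1) hcase
      omega
    · -- k - 1 = n - 2 : all values of b are ≤ n - 2 = k - 1
      have hall : Finset.univ.filter (fun i => (b i : ℕ) ≤ k - 1) = Finset.univ := by
        apply Finset.filter_true_of_mem
        intro i _
        have := (b i).isLt
        omega
      unfold cnt
      rw [hall]
      simp only [Finset.card_univ, Fintype.card_fin]
      omega

lemma ncard_setOf_good {n m : ℕ} (t : ℕ) :
    ({b : Fin n → Fin m | Good t b}).ncard = Nat.card {b : Fin n → Fin m // Good t b} := by
  rw [← Nat.card_coe_set_eq]
  exact Nat.card_congr (Equiv.subtypeEquivRight fun _ => Iff.rfl)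

end PFAux2


open PFAux PFAux2 in
/-- The number of sequences that are either parking functions or spherical parking
functions of length `n` is `(n+1)^(n-1) + (n-1)^(n-1)`. -/
theorem stmt2 (n : ℕ) (hn : 1 ≤ n) :
    Set.ncard {a : Fin n → ℕ |
        (∀ i : Fin n, sortedSeq a i < i.val + 1) ∨
        (sortedSeq a ⟨0, hn⟩ = 1 ∧ ∀ i : Fin n, 1 ≤ i.val → sortedSeq a i < i.val + 1)} =
      (n + 1) ^ (n - 1) + (n - 1) ^ (n - 1) := by
  rcases eq_or_lt_of_le hn with h1 | h2
  · -- n = 1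
    have hn1 : n = 1 := h1.symm
    subst hn1
    have hsort : ∀ (a : Fin 1 → ℕ) (i : Fin 1), sortedSeq a i = a ⟨0, hn⟩ := by
      intro a i
      show a (Tuple.sort a i) = a ⟨0, hn⟩
      congr 1
      exact Subsingleton.elim _ _
    have hset : {a : Fin 1 → ℕ |
        (∀ i : Fin 1, sortedSeq a i < i.val + 1) ∨
        (sortedSeq a ⟨0, hn⟩ = 1 ∧ ∀ i : Fin 1, 1 ≤ i.val → sortedSeq a i < i.val + 1)}
        = {(fun _ => 0 : Fin 1 → ℕ), fun _ => 1} := by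
      ext a
      simp only [Set.mem_setOf_eq, Set.mem_insert_iff, Set.mem_singleton_iff, hsort]
      constructor
      · rintro (h | ⟨h, -⟩)
        · left
          funext i
          rw [Subsingleton.elim i (⟨0, hn⟩ : Fin 1)]
          have := h ⟨0, hn⟩
          omega
        · right
          funext i
          rw [Subsingleton.elim i (⟨0, hn⟩ : Fin 1)]
          exact h
      · rintro (rfl | rfl)
        · left; intro i; simp
        · right
          exact ⟨rfl, fun i hi => absurd hi (by have := i.isLt; omega)⟩
    rw [hset, Set.ncard_pair (by
      intro h
      have := congrFun h ⟨0, hn⟩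
      simp at this)]
    norm_num
  · -- n ≥ 2
    have hn2 : 2 ≤ n := h2
    have hA := SA_eq (n := n) hn
    have hB := SB_eq hn2 hn
    rw [Set.setOf_or]
    rw [Set.ncard_union_eq ?disj ?finA ?finB]
    case disj =>
      rw [Set.disjoint_left]
      intro a haA haB
      simp only [Set.mem_setOf_eq] at haA haB
      have h1 := haA ⟨0, hn⟩
      have h2 := haB.1
      have h0 : ((⟨0, hn⟩ : Fin n) : ℕ) = 0 := rfl
      omega
    case finA =>
      rw [hA]
      exact (Set.toFinite _).image _
    case finB =>
      rw [hB]
      exact (Set.toFinite _).image _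
    have hcA : {a : Fin n → ℕ | ∀ i : Fin n, sortedSeq a i < i.val + 1}.ncard
        = (n + 1) ^ (n - 1) := by
      rw [hA, Set.ncard_image_of_injective _ val_inj, ncard_setOf_good]
      exact card_good (by omega) hn 1 (Or.inl ⟨rfl, rfl⟩)
    have hcB : {a : Fin n → ℕ | sortedSeq a ⟨0, hn⟩ = 1 ∧
          ∀ i : Fin n, 1 ≤ i.val → sortedSeq a i < i.val + 1}.ncard
        = (n - 1) ^ (n - 1) := by
      rw [hB, Set.ncard_image_of_injective _ val_succ_inj, ncard_setOf_good]
      exact card_good (by omega) hn 2 (Or.inr ⟨rfl, by omega⟩)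
    rw [hcA, hcB]
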